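/- arXiv:1502.00461 — 2 statements merged into one kernel-verified Lean document; each statement's English description precedes it below -/
import Mathlib

section
/- Let α ∈ O(2) have finite order and suppose α preserves a full-rank lattice L ⊂ ℝ² (α(L) = L). Then the order of α belongs to {1, 2, 3, 4, 6} (the crystallographic restriction in dimension 2). -/
open Matrix

private lemma statement12_sq_fin_two (M : Matrix (Fin 2) (Fin 2) ℝ) :
    M * M = M.trace • M - M.det • (1 : Matrix (Fin 2) (Fin 2) ℝ) := by
  ext i j
  fin_cases i <;> fin_cases j <;>
    simp [Matrix.mul_apply, Fin.sum_univ_two, Matrix.trace_fin_two, Matrix.det_fin_two,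
      Matrix.one_apply] <;> ring

private lemma statement12_order_mem (n : ℕ) (hn : 0 < n) (h : n ∣ 6 ∨ n ∣ 4) :
    n ∈ ({1, 2, 3, 4, 6} : Set ℕ) := by
  rcases h with h | h
  · have h6 := Nat.le_of_dvd (by norm_num) h
    interval_cases n <;> simp_all <;> omega
  · have h4 := Nat.le_of_dvd (by norm_num) h
    interval_cases n <;> simp_all <;> omega

set_option maxHeartbeats 1000000 in
/-- crystallographic restriction in dimension 2: if `α ∈ O(2)` has finite
order and preserves a full-rank lattice `L ⊂ ℝ²`, then the order of `α` is 1, 2, 3, 4 or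
6. -/
theorem statement12 (b : Module.Basis (Fin 2) ℝ (Fin 2 → ℝ)) (L : Set (Fin 2 → ℝ))
    (hL : L = (Submodule.span ℤ (Set.range b) : Submodule ℤ (Fin 2 → ℝ)))
    (α : Matrix.orthogonalGroup (Fin 2) ℝ) (hfin : IsOfFinOrder α)
    (hαL : (fun x => (↑α : Matrix (Fin 2) (Fin 2) ℝ) *ᵥ x) '' L = L) :
    orderOf α ∈ ({1, 2, 3, 4, 6} : Set ℕ) := by
  classical
  have hn0 : 0 < orderOf α := hfin.orderOf_pos
  set M : Matrix (Fin 2) (Fin 2) ℝ := (↑α : Matrix (Fin 2) (Fin 2) ℝ) with hMdef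
  -- orthogonality relations
  have hTM : Mᵀ * M = 1 := by
    have := α.2.1
    simpa [Matrix.star_eq_conjTranspose] using this
  have hMT : M * Mᵀ = 1 := by
    have := α.2.2
    simpa [Matrix.star_eq_conjTranspose] using this
  -- column norms
  have hcol : ∀ i, M 0 i ^ 2 + M 1 i ^ 2 = 1 := by
    intro i
    have := congrFun (congrFun hTM i) i
    simpa [Matrix.mul_apply, Fin.sum_univ_two, Matrix.one_apply, pow_two,
      Matrix.transpose_apply] using this
  have hsq0 := hcol 0
  have hsq1 := hcol 1
  have h00 : M 0 0 ^ 2 ≤ 1 := by nlinarith [sq_nonneg (M 1 0)]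
  have h11 : M 1 1 ^ 2 ≤ 1 := by nlinarith [sq_nonneg (M 0 1)]
  -- given a power of the matrix is 1, conclude divisibility of the order
  have hpow : ∀ k : ℕ, M ^ k = 1 → orderOf α ∣ k := by
    intro k hk
    apply orderOf_dvd_of_pow_eq_one
    apply Subtype.ext
    push_cast
    rw [← hMdef]
    exact hk
  -- representations of lattice elements are integral
  have hint : ∀ x ∈ (Submodule.span ℤ (Set.range ⇑b) : Submodule ℤ (Fin 2 → ℝ)),
      ∀ j, ∃ n : ℤ, b.repr x j = n := by
    intro x hx j
    rw [Submodule.mem_span_range_iff_exists_fun] at hx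
    obtain ⟨c, rfl⟩ := hx
    refine ⟨c j, ?_⟩
    have : (∑ i, c i • b i) = ∑ i, ((c i : ℝ) • b i) := by
      simp [Int.cast_smul_eq_zsmul]
    rw [this]
    fin_cases j <;> simp [Finsupp.single_apply]
  -- α maps lattice basis vectors into the lattice
  have hbL : ∀ i : Fin 2,
      (M *ᵥ b i) ∈ (Submodule.span ℤ (Set.range ⇑b) : Submodule ℤ (Fin 2 → ℝ)) := by
    intro i
    have hbi : (b i : Fin 2 → ℝ) ∈ L := by
      rw [hL]
      exact Submodule.subset_span (Set.mem_range_self i)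
    have hmem : M *ᵥ b i ∈ (fun x => M *ᵥ x) '' L := ⟨b i, hbi, rfl⟩
    rw [hαL] at hmem
    rwa [hL] at hmem
  -- the trace of M is an integer
  obtain ⟨m0, hm0⟩ := hint _ (hbL 0) 0
  obtain ⟨m1, hm1⟩ := hint _ (hbL 1) 1
  have htrA : M.trace = ((m0 + m1 : ℤ) : ℝ) := by
    have heq : M.trace = (LinearMap.toMatrix b b (Matrix.toLin' M)).trace := by
      have h1 := LinearMap.trace_eq_matrix_trace ℝ b (Matrix.toLin' M)
      have h2 := LinearMap.trace_eq_matrix_trace ℝ (Pi.basisFun ℝ (Fin 2)) (Matrix.toLin' M)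
      rw [LinearMap.toMatrix_eq_toMatrix', LinearMap.toMatrix'_toLin'] at h2
      rw [← h1, ← h2]
    rw [heq, Matrix.trace_fin_two, LinearMap.toMatrix_apply, LinearMap.toMatrix_apply,
      Matrix.toLin'_apply, Matrix.toLin'_apply, hm0, hm1]
    push_cast
    ring
  -- the trace is bounded by 2 in absolute value
  have htr2 : M.trace = M 0 0 + M 1 1 := Matrix.trace_fin_two M
  have hb1 : (-2 : ℝ) ≤ (m0 + m1 : ℤ) := by
    rw [← htrA, htr2]; nlinarith [sq_nonneg (M 0 0 + 1), sq_nonneg (M 1 1 + 1)]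
  have hb2 : ((m0 + m1 : ℤ) : ℝ) ≤ 2 := by
    rw [← htrA, htr2]; nlinarith [sq_nonneg (M 0 0 - 1), sq_nonneg (M 1 1 - 1)]
  have hbl : (-2 : ℤ) ≤ m0 + m1 := by exact_mod_cast hb1
  have hbu : m0 + m1 ≤ (2 : ℤ) := by exact_mod_cast hb2
  -- determinant is ±1
  have hdet : M.det = 1 ∨ M.det = -1 := by
    have hd2 : M.det * M.det = 1 := by
      have := congrArg Matrix.det hTM
      simpa [Matrix.det_mul, Matrix.det_transpose] using this
    exact mul_self_eq_one_iff.mp hd2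
  -- if det = -1 then trace = 0
  have htrace0 : M.det = -1 → M.trace = 0 := by
    intro hd
    have hadj := Matrix.mul_adjugate M
    have h1 : M * (M.adjugate + Mᵀ) = 0 := by
      rw [Matrix.mul_add, hadj, hMT, hd]
      simp
    have h2 : M.adjugate + Mᵀ = 0 :=
      calc M.adjugate + Mᵀ = (Mᵀ * M) * (M.adjugate + Mᵀ) := by rw [hTM, one_mul]
        _ = Mᵀ * (M * (M.adjugate + Mᵀ)) := by rw [Matrix.mul_assoc]
        _ = 0 := by rw [h1, Matrix.mul_zero]
    have h3 := congrFun (congrFun h2 0) 0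
    rw [Matrix.adjugate_fin_two] at h3
    simp at h3
    rw [htr2]
    linarith
  -- Cayley–Hamilton for 2×2
  have hCH := statement12_sq_fin_two M
  -- main case analysis on the integer trace
  set m : ℤ := m0 + m1 with hm
  interval_cases m
  · -- trace = -2 : M = -1
    have ht : M.trace = -2 := by rw [htrA]; norm_num
    rw [htr2] at ht
    have e0 : M 0 0 = -1 := by nlinarith
    have e1 : M 1 1 = -1 := by linarith
    have o0 : M 1 0 = 0 := by nlinarith [sq_nonneg (M 1 0)]
    have o1 : M 0 1 = 0 := by nlinarith [sq_nonneg (M 0 1)]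
    have h2 : M ^ 2 = 1 := by
      rw [pow_two]
      ext i j
      fin_cases i <;> fin_cases j <;>
        simp [Matrix.mul_apply, Fin.sum_univ_two, Matrix.one_apply, e0, e1, o0, o1]
    exact statement12_order_mem _ hn0 (Or.inl (dvd_trans (hpow 2 h2) (by norm_num)))
  · -- trace = -1 : det must be 1, M³ = 1
    have ht : M.trace = -1 := by rw [htrA]; norm_num
    have hd1 : M.det = 1 := by
      rcases hdet with h | h
      · exact h
      · exact absurd (htrace0 h) (by rw [ht]; norm_num)
    have hM2 : M * M = -M - 1 := by
      rw [hCH, ht, hd1]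
      simp
    have hM3 : M ^ 3 = 1 := by
      have e1 : M ^ 3 = (M * M) * M := by noncomm_ring
      rw [e1, hM2]
      have e2 : (-M - 1) * M = -(M * M) - M := by noncomm_ring
      rw [e2, hM2]
      noncomm_ring
    exact statement12_order_mem _ hn0 (Or.inl (dvd_trans (hpow 3 hM3) (by norm_num)))
  · -- trace = 0 : M⁴ = 1
    have ht : M.trace = 0 := by rw [htrA]; norm_num
    have hM4 : M ^ 4 = 1 := by
      rcases hdet with h | h
      · have hM2 : M * M = -1 := by rw [hCH, ht, h]; simp
        have e1 : M ^ 4 = (M * M) * (M * M) := by noncomm_ring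
        rw [e1, hM2]; simp
      · have hM2 : M * M = 1 := by rw [hCH, ht, h]; simp
        have e1 : M ^ 4 = (M * M) * (M * M) := by noncomm_ring
        rw [e1, hM2]; simp
    exact statement12_order_mem _ hn0 (Or.inr (hpow 4 hM4))
  · -- trace = 1 : det must be 1, M⁶ = 1
    have ht : M.trace = 1 := by rw [htrA]; norm_num
    have hd1 : M.det = 1 := by
      rcases hdet with h | h
      · exact h
      · exact absurd (htrace0 h) (by rw [ht]; norm_num)
    have hM2 : M * M = M - 1 := by
      rw [hCH, ht, hd1]
      simp
    have hM3 : M ^ 3 = -1 := by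
      have e1 : M ^ 3 = (M * M) * M := by noncomm_ring
      rw [e1, hM2]
      have e2 : (M - 1) * M = (M * M) - M := by noncomm_ring
      rw [e2, hM2]
      noncomm_ring
    have hM6 : M ^ 6 = 1 := by
      have e1 : M ^ 6 = (M ^ 3) * (M ^ 3) := by noncomm_ring
      rw [e1, hM3]; simp
    exact statement12_order_mem _ hn0 (Or.inl (hpow 6 hM6))
  · -- trace = 2 : M = 1
    have ht : M.trace = 2 := by rw [htrA]; norm_num
    rw [htr2] at ht
    have e0 : M 0 0 = 1 := by nlinarith
    have e1 : M 1 1 = 1 := by linarith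
    have o0 : M 1 0 = 0 := by nlinarith [sq_nonneg (M 1 0)]
    have o1 : M 0 1 = 0 := by nlinarith [sq_nonneg (M 0 1)]
    have h2 : M ^ 2 = 1 := by
      rw [pow_two]
      ext i j
      fin_cases i <;> fin_cases j <;>
        simp [Matrix.mul_apply, Fin.sum_univ_two, Matrix.one_apply, e0, e1, o0, o1]
    exact statement12_order_mem _ hn0 (Or.inl (dvd_trans (hpow 2 h2) (by norm_num)))
end

section
/- Let L ⊂ ℝ^{n+1} be a full-rank lattice and let L̃ = {v ∈ ℝ^n : (v, y) ∈ L for some y ∈ ℝ} be its projection to the first n coordinates. Suppose (0, y₀) ∈ L for some y₀ > 0 and that (0, y₀) is rational with respect to L (i.e., ⟨(0,y₀), l⟩ ∈ ℚ for all l ∈ L). Then for every v ∈ L̃ there exists a nonzero integer q with (qv, 0) ∈ L; consequently L̃ × {0} is rationally compatible with L. -/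
open Matrix

section aux

variable {n : ℕ}

/-- snoc with 0 as a ℤ-linear map -/
noncomputable def snocZero (n : ℕ) : (Fin n → ℝ) →ₗ[ℤ] (Fin (n + 1) → ℝ) where
  toFun v := Fin.snoc v 0
  map_add' u v := by
    funext i
    refine Fin.lastCases ?_ (fun j => ?_) i <;>
      simp [Fin.snoc_last, Fin.snoc_castSucc]
  map_smul' c v := by
    funext i
    refine Fin.lastCases ?_ (fun j => ?_) i <;>
      simp [Fin.snoc_last, Fin.snoc_castSucc]

lemma dot_snoc (v : Fin n → ℝ) (y : ℝ) :
    (Fin.snoc (0 : Fin n → ℝ) y₀ : Fin (n + 1) → ℝ) ⬝ᵥ (Fin.snoc v y) = y₀ * y := by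
  simp [dotProduct, Fin.sum_univ_castSucc, Fin.snoc_castSucc, Fin.snoc_last]

end aux

/-- let `L ⊂ ℝ^{n+1}` be a full-rank lattice, `L̃` its coordinate projection
to `ℝ^n`. If `(0, y₀) ∈ L` with `y₀ > 0` and `(0, y₀)` is rational with respect to `L`
(`⟨(0,y₀), l⟩ ∈ ℚ` for all `l ∈ L`), then for every `v ∈ L̃` there is a nonzero integer `q`
with `(qv, 0) ∈ L`; consequently there is a single nonzero integer `r` with `(rv, 0) ∈ L`
for all `v ∈ L̃`, i.e. `L̃ × {0}` is rationally compatible with `L`. -/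
theorem statement13 (n : ℕ) (b : Module.Basis (Fin (n + 1)) ℝ (Fin (n + 1) → ℝ))
    (L : Set (Fin (n + 1) → ℝ))
    (hL : L = (Submodule.span ℤ (Set.range b) : Submodule ℤ (Fin (n + 1) → ℝ)))
    (Lproj : Set (Fin n → ℝ))
    (hproj : Lproj = {v : Fin n → ℝ | ∃ y : ℝ, (Fin.snoc v y : Fin (n + 1) → ℝ) ∈ L})
    (y₀ : ℝ) (hy₀ : 0 < y₀)
    (h0y : (Fin.snoc (0 : Fin n → ℝ) y₀ : Fin (n + 1) → ℝ) ∈ L)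
    (hrat : ∀ l ∈ L, ∃ q : ℚ, (Fin.snoc (0 : Fin n → ℝ) y₀ : Fin (n + 1) → ℝ) ⬝ᵥ l = (q : ℝ)) :
    (∀ v ∈ Lproj, ∃ q : ℤ, q ≠ 0 ∧
      (Fin.snoc ((q : ℝ) • v) (0 : ℝ) : Fin (n + 1) → ℝ) ∈ L) ∧
    ∃ r : ℤ, r ≠ 0 ∧ ∀ v ∈ Lproj,
      (Fin.snoc ((r : ℝ) • v) (0 : ℝ) : Fin (n + 1) → ℝ) ∈ L := by
  set N : Submodule ℤ (Fin (n + 1) → ℝ) := Submodule.span ℤ (Set.range b) with hN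
  -- y₀² is a nonzero rational
  obtain ⟨q₂, hq₂⟩ := hrat _ h0y
  rw [dot_snoc] at hq₂
  have hq₂0 : q₂ ≠ 0 := by
    intro h
    rw [h] at hq₂
    simp at hq₂
    nlinarith
  -- key step
  have key : ∀ v : Fin n → ℝ, ∀ y : ℝ, (Fin.snoc v y : Fin (n + 1) → ℝ) ∈ L →
      ∃ q : ℤ, q ≠ 0 ∧ (Fin.snoc ((q : ℝ) • v) (0 : ℝ) : Fin (n + 1) → ℝ) ∈ L := by
    intro v y hv
    obtain ⟨q₁, hq₁⟩ := hrat _ hv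
    rw [dot_snoc] at hq₁
    set s : ℚ := q₁ / q₂ with hs
    have hy : y = (s : ℝ) * y₀ := by
      have hy₀' : y₀ ≠ 0 := ne_of_gt hy₀
      push_cast [hs]
      rw [← hq₁, ← hq₂]
      field_simp
    refine ⟨(s.den : ℤ), by exact_mod_cast s.den_nz, ?_⟩
    have hz : ((s.den : ℝ)) • (Fin.snoc v y : Fin (n + 1) → ℝ)
        - ((s.num : ℝ)) • (Fin.snoc (0 : Fin n → ℝ) y₀ : Fin (n + 1) → ℝ)
        = (Fin.snoc (((s.den : ℤ) : ℝ) • v) (0 : ℝ) : Fin (n + 1) → ℝ) := by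
      funext i
      refine Fin.lastCases ?_ (fun j => ?_) i
      · simp only [Pi.sub_apply, Pi.smul_apply, Fin.snoc_last, smul_eq_mul]
        rw [hy]
        have h1 : ((s.den : ℕ) : ℝ) * (s : ℝ) = (s.num : ℝ) := by
          rw [Rat.cast_def]
          have : ((s.den : ℕ) : ℝ) ≠ 0 := Nat.cast_ne_zero.2 s.den_nz
          field_simp
        nlinarith [h1]
      · simp only [Pi.sub_apply, Pi.smul_apply, Fin.snoc_castSucc, smul_eq_mul,
          Pi.zero_apply, mul_zero, sub_zero]
        norm_num
    rw [hL] at hv h0y ⊢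
    rw [← hz,
      show ((s.den : ℝ)) • (Fin.snoc v y : Fin (n + 1) → ℝ) = ((s.den : ℤ) • (Fin.snoc v y : Fin (n + 1) → ℝ)) by
        rw [← Int.cast_smul_eq_zsmul ℝ]; norm_num,
      show ((s.num : ℝ)) • (Fin.snoc (0 : Fin n → ℝ) y₀ : Fin (n + 1) → ℝ) = (s.num • (Fin.snoc (0 : Fin n → ℝ) y₀ : Fin (n + 1) → ℝ)) by
        rw [← Int.cast_smul_eq_zsmul ℝ]]
    exact Submodule.sub_mem _ (Submodule.smul_mem _ _ hv) (Submodule.smul_mem _ _ h0y)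
  constructor
  · intro v hv
    rw [hproj] at hv
    obtain ⟨y, hy⟩ := hv
    exact key v y hy
  · -- uniform r
    -- for each basis vector, get q i
    have hbmem : ∀ i, b i ∈ L := by
      intro i
      rw [hL]
      exact Submodule.subset_span ⟨i, rfl⟩
    have hsnocb : ∀ i : Fin (n + 1),
        (Fin.snoc (fun j : Fin n => b i j.castSucc) (b i (Fin.last n)) : Fin (n + 1) → ℝ) = b i := by
      intro i
      funext k
      refine Fin.lastCases ?_ (fun j => ?_) k <;> simp [Fin.snoc_last, Fin.snoc_castSucc]
    have hq : ∀ i : Fin (n + 1), ∃ q : ℤ, q ≠ 0 ∧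
        (Fin.snoc ((q : ℝ) • fun j : Fin n => b i j.castSucc) (0 : ℝ) : Fin (n + 1) → ℝ) ∈ L := by
      intro i
      exact key _ _ (by rw [hsnocb]; exact hbmem i)
    choose q hq0 hqmem using hq
    refine ⟨∏ i, q i, Finset.prod_ne_zero_iff.2 fun i _ => hq0 i, ?_⟩
    intro v hv
    -- work in the comap submodule
    set S : Submodule ℤ (Fin n → ℝ) := N.comap (snocZero n) with hS
    have hSmem : ∀ w : Fin n → ℝ, (Fin.snoc w (0:ℝ) : Fin (n+1) → ℝ) ∈ L ↔ w ∈ S := by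
      intro w
      rw [hL]
      rfl
    have hqS : ∀ i, (q i) • (fun j : Fin n => b i j.castSucc) ∈ S := by
      intro i
      rw [← hSmem]
      have := hqmem i
      convert this using 2
      funext j
      simp [zsmul_eq_mul]
    have hrS : ∀ i, (∏ k, q k) • (fun j : Fin n => b i j.castSucc) ∈ S := by
      intro i
      rw [← Finset.mul_prod_erase Finset.univ q (Finset.mem_univ i), mul_comm, mul_smul]
      exact Submodule.smul_mem _ _ (hqS i)
    -- decompose v
    rw [hproj] at hv
    obtain ⟨y, hy⟩ := hv
    rw [hL] at hy
    rw [SetLike.mem_coe, Submodule.mem_span_range_iff_exists_fun] at hy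
    obtain ⟨c, hc⟩ := hy
    have hv' : v = ∑ i, c i • fun j : Fin n => b i j.castSucc := by
      funext j
      have := congrFun hc j.castSucc
      simp only [Finset.sum_apply, Pi.smul_apply, Fin.snoc_castSucc] at this ⊢
      rw [← this]
    have hfin : (∏ i, q i) • v ∈ S := by
      rw [hv', Finset.smul_sum]
      refine Submodule.sum_mem _ fun i _ => ?_
      rw [smul_comm]
      exact Submodule.smul_mem _ _ (hrS i)
    rw [hSmem]
    rw [show ((((∏ i, q i) : ℤ) : ℝ)) • v = ((∏ i, q i) : ℤ) • v from
      (Int.cast_smul_eq_zsmul ℝ _ v)]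
    exact hfin
end
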